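/- For any integers n and k with 2 ≤ k ≤ ⌊n/2⌋, the outer-independent total Roman domination number of the circulant graph C(n,k) equals n − ⌊⌊n/(k+1)⌋/2⌋, i.e., γ_oitR(C(n,k)) = n − ⌊⌊n/(k+1)⌋/2⌋. -/

import Mathlib

namespace OITRPaper

variable {V : Type*}

/-- `S` is a vertex cover of `G`: every edge of `G` is incident to a vertex of `S`. -/
def IsVertexCover (G : SimpleGraph V) (S : Set V) : Prop :=
  ∀ ⦃u v : V⦄, G.Adj u v → u ∈ S ∨ v ∈ S

/-- `S` is an independent set of `G`: no two vertices of `S` are adjacent. -/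
def IsIndepSet (G : SimpleGraph V) (S : Set V) : Prop :=
  ∀ ⦃u : V⦄, u ∈ S → ∀ ⦃v : V⦄, v ∈ S → ¬ G.Adj u v

/-- `S` is a dominating set of `G`. -/
def IsDomSet (G : SimpleGraph V) (S : Set V) : Prop :=
  ∀ v : V, v ∉ S → ∃ u ∈ S, G.Adj v u

/-- `S` is a total dominating set of `G`: every vertex has a neighbor in `S`. -/
def IsTotalDomSet (G : SimpleGraph V) (S : Set V) : Prop :=
  ∀ v : V, ∃ u ∈ S, G.Adj v u

/-- `G` is claw-free: it contains no induced `K_{1,3}`. -/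
def ClawFree (G : SimpleGraph V) : Prop :=
  ∀ c a b d : V, G.Adj c a → G.Adj c b → G.Adj c d →
    a ≠ b → a ≠ d → b ≠ d → G.Adj a b ∨ G.Adj a d ∨ G.Adj b d

/-- `f` is a Roman dominating function on `G`. -/
def IsRDF (G : SimpleGraph V) (f : V → ℕ) : Prop :=
  (∀ v, f v ≤ 2) ∧ ∀ v, f v = 0 → ∃ u, G.Adj v u ∧ f u = 2

/-- `f` is an outer-independent Roman dominating function on `G`. -/
def IsOIRDF (G : SimpleGraph V) (f : V → ℕ) : Prop :=
  IsRDF G f ∧ IsIndepSet G {v | f v = 0}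

/-- `f` is an outer-independent total Roman dominating function on `G`. -/
def IsOITRDF (G : SimpleGraph V) (f : V → ℕ) : Prop :=
  IsOIRDF G f ∧ ∀ v, 1 ≤ f v → ∃ u, G.Adj v u ∧ 1 ≤ f u

variable [Fintype V]

/-- The vertex cover number `α(G)`. -/
noncomputable def vertexCoverNum (G : SimpleGraph V) : ℕ :=
  sInf {m | ∃ S : Set V, IsVertexCover G S ∧ S.ncard = m}

/-- The independence number `β(G)`. -/
noncomputable def indepNum (G : SimpleGraph V) : ℕ :=
  sSup {m | ∃ S : Set V, IsIndepSet G S ∧ S.ncard = m}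

/-- The domination number `γ(G)`. -/
noncomputable def domNum (G : SimpleGraph V) : ℕ :=
  sInf {m | ∃ S : Set V, IsDomSet G S ∧ S.ncard = m}

/-- The total domination number `γ_t(G)`. -/
noncomputable def totalDomNum (G : SimpleGraph V) : ℕ :=
  sInf {m | ∃ S : Set V, IsTotalDomSet G S ∧ S.ncard = m}

/-- The outer-independent total domination number `γ_{t,oi}(G)`. -/
noncomputable def oiTotalDomNum (G : SimpleGraph V) : ℕ :=
  sInf {m | ∃ S : Set V, IsTotalDomSet G S ∧ IsIndepSet G Sᶜ ∧ S.ncard = m}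

/-- The Roman domination number `γ_R(G)`. -/
noncomputable def romanDomNum (G : SimpleGraph V) : ℕ :=
  sInf {w | ∃ f : V → ℕ, IsRDF G f ∧ ∑ v, f v = w}

/-- The outer-independent Roman domination number `γ_{oiR}(G)`. -/
noncomputable def oiRomanDomNum (G : SimpleGraph V) : ℕ :=
  sInf {w | ∃ f : V → ℕ, IsOIRDF G f ∧ ∑ v, f v = w}

/-- The outer-independent total Roman domination number `γ_{oitR}(G)`. -/
noncomputable def oitRomanDomNum (G : SimpleGraph V) : ℕ :=
  sInf {w | ∃ f : V → ℕ, IsOITRDF G f ∧ ∑ v, f v = w}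


/-- The circulant graph `C(n,k)` on vertex set `ℤ/nℤ` (modelled as `Fin n`):
distinct vertices `i, j` are adjacent iff `j ≡ i + t (mod n)` or `i ≡ j + t (mod n)`
for some `t ∈ {1, …, k}`. -/
def circulant (n k : ℕ) : SimpleGraph (Fin n) where
  Adj i j := i ≠ j ∧ ∃ t : ℕ, 1 ≤ t ∧ t ≤ k ∧
      ((i.val + t) % n = j.val ∨ (j.val + t) % n = i.val)
  symm := by
    constructor
    rintro i j ⟨hij, t, h1, h2, h⟩
    exact ⟨hij.symm, t, h1, h2, h.symm⟩
  loopless := ⟨fun i h => h.1 rfl⟩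

/-- The wheel graph `W_n` of order `n`: a universal hub vertex (`none`) joined to all
vertices of a cycle of order `n - 1`. -/
def wheel (n : ℕ) : SimpleGraph (Option (Fin (n - 1))) where
  Adj x y :=
    match x, y with
    | none, none => False
    | none, some _ => True
    | some _, none => True
    | some i, some j => i ≠ j ∧
        ((i.val + 1) % (n - 1) = j.val ∨ (j.val + 1) % (n - 1) = i.val)
  symm := by
    constructor
    rintro (_ | i) (_ | j) h <;> simp_all
    exact ⟨Ne.symm h.1, h.2.symm⟩
  loopless := by
    constructor
    rintro (_ | i) h <;> simp_all

/-- The direct (tensor) product of two simple graphs. -/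
def directProd {α β : Type*} (G : SimpleGraph α) (H : SimpleGraph β) :
    SimpleGraph (α × β) where
  Adj x y := G.Adj x.1 y.1 ∧ H.Adj x.2 y.2
  symm := ⟨fun _ _ ⟨h1, h2⟩ => ⟨h1.symm, h2.symm⟩⟩
  loopless := ⟨fun x h => G.loopless.irrefl x.1 h.1⟩


private lemma circ_adj_def {n k : ℕ} (i j : Fin n) :
    (circulant n k).Adj i j ↔ i ≠ j ∧ ∃ t : ℕ, 1 ≤ t ∧ t ≤ k ∧
      ((i.val + t) % n = j.val ∨ (j.val + t) % n = i.val) := Iff.rfl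

private lemma mod_two_cases {n : ℕ} (hn : 0 < n) (a : ℕ) (h : a < 2 * n) :
    a % n = if n ≤ a then a - n else a := by
  split_ifs with h1
  · rw [Nat.mod_eq_sub_mod h1, Nat.mod_eq_of_lt (by omega)]
  · exact Nat.mod_eq_of_lt (by omega)

private lemma dist_eq {n : ℕ} (hn : 0 < n) (i j : Fin n) :
    (j.val + n - i.val) % n = if i.val ≤ j.val then j.val - i.val else j.val + n - i.val := by
  have hi := i.isLt; have hj := j.isLt
  rw [mod_two_cases hn _ (by omega)]
  split_ifs <;> omega

private lemma circ_adj_iff {n k : ℕ} (hk1 : 1 ≤ k) (hkn : 2 * k ≤ n) (i j : Fin n) :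
    (circulant n k).Adj i j ↔
      (1 ≤ (j.val + n - i.val) % n ∧ (j.val + n - i.val) % n ≤ k) ∨
      (n - k ≤ (j.val + n - i.val) % n ∧ (j.val + n - i.val) % n ≤ n - 1) := by
  have hn : 0 < n := by omega
  have hi := i.isLt; have hj := j.isLt
  rw [dist_eq hn]
  rw [circ_adj_def]
  constructor
  · rintro ⟨hne, t, ht1, htk, h | h⟩
    · rw [mod_two_cases hn _ (by omega)] at h
      split_ifs at h ⊢ <;> omega
    · rw [mod_two_cases hn _ (by omega)] at h
      split_ifs at h ⊢ <;> omega
  · intro h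
    have hne : i ≠ j := by
      intro e; subst e; split_ifs at h <;> omega
    split_ifs at h with hij
    · rcases h with ⟨h1, h2⟩ | ⟨h1, h2⟩
      · refine ⟨hne, j.val - i.val, h1, h2, Or.inl ?_⟩
        rw [Nat.mod_eq_of_lt (by omega)]; omega
      · refine ⟨hne, n - (j.val - i.val), by omega, by omega, Or.inr ?_⟩
        rw [mod_two_cases hn _ (by omega)]
        split_ifs <;> omega
    · rcases h with ⟨h1, h2⟩ | ⟨h1, h2⟩
      · refine ⟨hne, j.val + n - i.val, h1, h2, Or.inl ?_⟩
        rw [mod_two_cases hn _ (by omega)]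
        split_ifs <;> omega
      · refine ⟨hne, i.val - j.val, by omega, by omega, Or.inr ?_⟩
        rw [Nat.mod_eq_of_lt (by omega)]; omega

private lemma indep_card_le {n k : ℕ} (hk1 : 1 ≤ k) (hkn : 2 * k ≤ n)
    (Z : Finset (Fin n))
    (hZ : ∀ a ∈ Z, ∀ b ∈ Z, ¬ (circulant n k).Adj a b) :
    Z.card * (k + 1) ≤ n := by
  have hn : 0 < n := by omega
  classical
  have key : Set.InjOn (fun p : Fin n × ℕ => ((⟨(p.1.val + p.2) % n, Nat.mod_lt _ hn⟩ : Fin n)))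
      ↑(Z ×ˢ Finset.range (k+1)) := by
    rintro ⟨a, s⟩ has ⟨b, t⟩ hbt he
    simp only [Finset.coe_product, Set.mem_prod, Finset.mem_coe, Finset.coe_range,
      Set.mem_Iio] at has hbt
    simp only [Fin.mk.injEq] at he
    have ha := a.isLt; have hb := b.isLt
    rw [mod_two_cases hn _ (by omega), mod_two_cases hn _ (by omega)] at he
    have hab : a = b := by
      by_contra hab
      have hadj := hZ a has.1 b hbt.1
      rw [circ_adj_iff hk1 hkn, dist_eq hn] at hadj
      have hvne : a.val ≠ b.val := fun h => hab (Fin.ext h)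
      split_ifs at he hadj <;> omega
    subst hab
    have hst : s = t := by split_ifs at he <;> omega
    rw [hst]
  calc Z.card * (k+1) = (Z ×ˢ Finset.range (k+1)).card := by
        rw [Finset.card_product, Finset.card_range]
    _ ≤ Finset.univ.card := Finset.card_le_card_of_injOn _ (fun _ _ => Finset.mem_univ _) key
    _ = n := by simp

private lemma two_zeros {n k : ℕ} (hk1 : 1 ≤ k) (hkn : 2 * k ≤ n)
    (Z : Finset (Fin n)) (hZ : ∀ a ∈ Z, ∀ b ∈ Z, ¬ (circulant n k).Adj a b) (u : Fin n)
    (S : Finset (Fin n)) (hS : ∀ z ∈ S, z ∈ Z ∧ (circulant n k).Adj z u) :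
    S.card ≤ 2 := by
  classical
  have hn : 0 < n := by omega
  by_contra hlt
  push_neg at hlt
  obtain ⟨a, b, c, ha, hb, hc, hab, hac, hbc⟩ := Finset.two_lt_card_iff.mp hlt
  replace ha := hS a ha; replace hb := hS b hb; replace hc := hS c hc
  have hau := ha.2; have hbu := hb.2; have hcu := hc.2
  have hnab := hZ a ha.1 b hb.1
  have hnac := hZ a ha.1 c hc.1
  have hnbc := hZ b hb.1 c hc.1
  rw [circ_adj_iff hk1 hkn, dist_eq hn] at hau hbu hcu hnab hnac hnbc
  have h1 : a.val ≠ b.val := fun h => hab (Fin.ext h)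
  have h2 : a.val ≠ c.val := fun h => hac (Fin.ext h)
  have h3 : b.val ≠ c.val := fun h => hbc (Fin.ext h)
  have := a.isLt; have := b.isLt; have := c.isLt; have := u.isLt
  split_ifs at hau hbu hcu hnab hnac hnbc <;> omega

private lemma upper {n k m : ℕ} (hk2 : 2 ≤ k) (hkn : 2 * k ≤ n)
    (h2m : (k + 1) * (2 * m) ≤ n) :
    ∃ f : Fin n → ℕ, IsOITRDF (circulant n k) f ∧ ∑ v, f v = n - m := by
  classical
  have hn : 0 < n := by omega
  have hk1 : 1 ≤ k := by omega
  set Zset := (Finset.range (2*m)).image (fun s => (k+1)*s) with hZdef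
  set Tset := (Finset.range m).image (fun j => (k+1)*(2*j) + 1) with hTdef
  have hZmem : ∀ a, a ∈ Zset ↔ ∃ s, s < 2*m ∧ a = (k+1)*s := by
    intro a
    simp only [hZdef, Finset.mem_image, Finset.mem_range]
    constructor
    · rintro ⟨s, h1, h2⟩; exact ⟨s, h1, h2.symm⟩
    · rintro ⟨s, h1, h2⟩; exact ⟨s, h1, h2.symm⟩
  have hTmem : ∀ a, a ∈ Tset ↔ ∃ j, j < m ∧ a = (k+1)*(2*j) + 1 := by
    intro a
    simp only [hTdef, Finset.mem_image, Finset.mem_range]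
    constructor
    · rintro ⟨s, h1, h2⟩; exact ⟨s, h1, h2.symm⟩
    · rintro ⟨s, h1, h2⟩; exact ⟨s, h1, h2.symm⟩
  have hZlt : ∀ a ∈ Zset, a + (k+1) ≤ n := by
    intro a ha
    rw [hZmem] at ha
    obtain ⟨s, hs, rfl⟩ := ha
    have h1 : (k+1)*(s+1) ≤ (k+1)*(2*m) := Nat.mul_le_mul_left _ (by omega)
    have h2 : (k+1)*(s+1) = (k+1)*s + (k+1) := by ring
    omega
  have hTlt : ∀ a ∈ Tset, a + k ≤ n := by
    intro a ha
    rw [hTmem] at ha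
    obtain ⟨j, hj, rfl⟩ := ha
    have h1 : (k+1)*(2*j) ∈ Zset := (hZmem _).2 ⟨2*j, by omega, rfl⟩
    have := hZlt _ h1
    omega
  have hZT : ∀ a, a ∈ Zset → a ∉ Tset := by
    intro a haZ haT
    rw [hZmem] at haZ; rw [hTmem] at haT
    obtain ⟨s, hs, rfl⟩ := haZ
    obtain ⟨j, hj, he⟩ := haT
    have h4 := Nat.dvd_sub (dvd_mul_right (k+1) s) (dvd_mul_right (k+1) (2*j))
    rw [he, Nat.add_sub_cancel_left] at h4
    have := Nat.le_of_dvd one_pos h4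
    omega
  set f : Fin n → ℕ := fun v => if v.val ∈ Zset then 0 else if v.val ∈ Tset then 2 else 1
    with hfdef
  have hf0 : ∀ v : Fin n, f v = 0 ↔ v.val ∈ Zset := by
    intro v
    by_cases h1 : v.val ∈ Zset
    · simp [hfdef, h1]
    · by_cases h2 : v.val ∈ Tset <;> simp [hfdef, h1, h2]
  have hf2 : ∀ v : Fin n, f v = 2 ↔ v.val ∈ Tset := by
    intro v
    by_cases h1 : v.val ∈ Zset
    · simp [hfdef, h1, hZT _ h1]
    · by_cases h2 : v.val ∈ Tset <;> simp [hfdef, h1, h2]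
  -- RDF property
  have hRDF : ∀ v : Fin n, f v = 0 → ∃ u, (circulant n k).Adj v u ∧ f u = 2 := by
    intro v hv
    rw [hf0, hZmem] at hv
    obtain ⟨s, hs, hvs⟩ := hv
    have hsplit : ∃ j, s = 2*j ∨ s = 2*j+1 := ⟨s/2, by omega⟩
    obtain ⟨j, hj | hj⟩ := hsplit
    · subst hj
      have hjm : j < m := by omega
      have hT : (k+1)*(2*j) + 1 ∈ Tset := (hTmem _).2 ⟨j, hjm, rfl⟩
      have hZe : (k+1)*(2*j) ∈ Zset := (hZmem _).2 ⟨2*j, by omega, rfl⟩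
      have hb := hZlt _ hZe
      have hlt : (k+1)*(2*j)+1 < n := by omega
      refine ⟨⟨(k+1)*(2*j)+1, hlt⟩, (circ_adj_def _ _).2 ⟨?_, 1, le_refl 1, by omega, Or.inl ?_⟩, (hf2 _).2 hT⟩
      · intro e
        have hc := congrArg Fin.val e
        simp only [] at hc
        rw [hvs] at hc
        omega
      · show (v.val + 1) % n = (k+1)*(2*j)+1
        rw [hvs, Nat.mod_eq_of_lt hlt]
    · subst hj
      have hjm : j < m := by omega
      have hT : (k+1)*(2*j) + 1 ∈ Tset := (hTmem _).2 ⟨j, hjm, rfl⟩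
      have hZe : (k+1)*(2*j+1) ∈ Zset := (hZmem _).2 ⟨2*j+1, by omega, rfl⟩
      have hb := hZlt _ hZe
      have hrel : (k+1)*(2*j+1) = (k+1)*(2*j) + (k+1) := by ring
      have hlt : (k+1)*(2*j)+1 < n := by omega
      refine ⟨⟨(k+1)*(2*j)+1, hlt⟩, (circ_adj_def _ _).2 ⟨?_, k, hk1, le_refl k, Or.inr ?_⟩, (hf2 _).2 hT⟩
      · intro e
        have hc := congrArg Fin.val e
        simp only [] at hc
        rw [hvs] at hc
        omega
      · show ((k+1)*(2*j)+1 + k) % n = v.val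
        rw [hvs]
        have he : (k+1)*(2*j)+1 + k = (k+1)*(2*j+1) := by ring
        rw [he, Nat.mod_eq_of_lt (by omega)]
  -- Independence
  have hIndep : IsIndepSet (circulant n k) {v | f v = 0} := by
    intro a ha b hb hadj
    rw [Set.mem_setOf_eq, hf0, hZmem] at ha hb
    obtain ⟨s, hs, has⟩ := ha
    obtain ⟨t, ht, hbt⟩ := hb
    have h1 := hZlt a.val ((hZmem _).2 ⟨s, hs, has⟩)
    have h2 := hZlt b.val ((hZmem _).2 ⟨t, ht, hbt⟩)
    have hgap : a.val + (k+1) ≤ b.val ∨ b.val + (k+1) ≤ a.val ∨ a.val = b.val := by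
      rcases lt_trichotomy s t with h | h | h
      · left
        have hmul : (k+1)*(s+1) ≤ (k+1)*t := Nat.mul_le_mul_left _ (by omega)
        have he : (k+1)*(s+1) = (k+1)*s + (k+1) := by ring
        omega
      · right; right; rw [has, hbt, h]
      · right; left
        have hmul : (k+1)*(t+1) ≤ (k+1)*s := Nat.mul_le_mul_left _ (by omega)
        have he : (k+1)*(t+1) = (k+1)*t + (k+1) := by ring
        omega
    rw [circ_adj_iff hk1 hkn, dist_eq hn] at hadj
    clear has hbt
    split_ifs at hadj <;> omega
  -- Total condition
  have hTot : ∀ v : Fin n, ∃ u, (circulant n k).Adj v u ∧ 1 ≤ f u := by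
    intro v
    have hv := v.isLt
    set a : Fin n := ⟨(v.val + 1) % n, Nat.mod_lt _ hn⟩ with hadef
    have hav : a.val = (v.val + 1) % n := rfl
    have hne1 : v ≠ a := by
      intro e
      have hc := congrArg Fin.val e
      rw [hav, mod_two_cases hn _ (by omega)] at hc
      split_ifs at hc <;> omega
    have hadj1 : (circulant n k).Adj v a := (circ_adj_def _ _).2 ⟨hne1, 1, le_refl 1, by omega, Or.inl rfl⟩
    by_cases h1 : 1 ≤ f a
    · exact ⟨a, hadj1, h1⟩
    · have ha0 : f a = 0 := by omega
      have haZ : a.val ∈ Zset := (hf0 a).1 ha0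
      obtain ⟨s, hs, has⟩ := (hZmem _).1 haZ
      have haB := hZlt _ haZ
      set b : Fin n := ⟨(v.val + 2) % n, Nat.mod_lt _ hn⟩ with hbdef
      have hbv : b.val = (v.val + 2) % n := rfl
      have hb' : b.val = a.val + 1 := by
        rw [hbv]
        have e1 : (a.val + 1) % n = (v.val + 2) % n := by
          rw [hav, Nat.mod_add_mod]
        rw [← e1, Nat.mod_eq_of_lt (by omega)]
      have hneb : v ≠ b := by
        intro e
        have hc := congrArg Fin.val e
        rw [hbv, mod_two_cases hn _ (by omega)] at hc
        split_ifs at hc <;> omega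
      have hadj2 : (circulant n k).Adj v b := (circ_adj_def _ _).2 ⟨hneb, 2, by omega, hk2, Or.inl rfl⟩
      refine ⟨b, hadj2, ?_⟩
      by_contra hno
      have hb0 : f b = 0 := by omega
      have hbZ : b.val ∈ Zset := (hf0 b).1 hb0
      obtain ⟨t, hts, hbt⟩ := (hZmem _).1 hbZ
      have h4 := Nat.dvd_sub (dvd_mul_right (k+1) t) (dvd_mul_right (k+1) s)
      have he : (k+1)*t = (k+1)*s + 1 := by omega
      rw [he, Nat.add_sub_cancel_left] at h4
      have := Nat.le_of_dvd one_pos h4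
      omega
  -- the sum
  have hZcard : (Finset.univ.filter (fun v : Fin n => v.val ∈ Zset)).card = 2*m := by
    have hZn : ∀ a ∈ Zset, a < n := fun a ha => by have := hZlt a ha; omega
    have h1 : Finset.univ.filter (fun v : Fin n => v.val ∈ Zset) = Zset.attachFin hZn := by
      ext v
      simp [Finset.mem_attachFin, Finset.mem_filter]
    rw [h1, Finset.card_attachFin, hZdef,
      Finset.card_image_of_injective _ (fun x y h => by
        exact Nat.eq_of_mul_eq_mul_left (by omega) h),
      Finset.card_range]
  have hTcard : (Finset.univ.filter (fun v : Fin n => v.val ∈ Tset)).card = m := by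
    have hTn : ∀ a ∈ Tset, a < n := fun a ha => by have := hTlt a ha; omega
    have h1 : Finset.univ.filter (fun v : Fin n => v.val ∈ Tset) = Tset.attachFin hTn := by
      ext v
      simp [Finset.mem_attachFin, Finset.mem_filter]
    rw [h1, Finset.card_attachFin, hTdef,
      Finset.card_image_of_injective _ (fun x y h => by
        have := Nat.eq_of_mul_eq_mul_left (show 0 < k+1 by omega) (show (k+1)*(2*x) = (k+1)*(2*y) by omega)
        omega),
      Finset.card_range]
  have hsum : ∑ v, f v = n - m := by
    have key : ∑ v : Fin n, (f v + (if v.val ∈ Zset then 1 else 0))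
        = ∑ v : Fin n, (1 + (if v.val ∈ Tset then 1 else 0)) := by
      apply Finset.sum_congr rfl
      intro v _
      by_cases h1 : v.val ∈ Zset
      · simp [hfdef, h1, hZT _ h1]
      · by_cases h2 : v.val ∈ Tset <;> simp [hfdef, h1, h2]
    rw [Finset.sum_add_distrib, Finset.sum_add_distrib, ← Finset.card_filter,
      ← Finset.card_filter, hZcard, hTcard] at key
    simp only [Finset.sum_const, Finset.card_univ, Fintype.card_fin, smul_eq_mul, mul_one] at key
    omega
  exact ⟨f, ⟨⟨⟨fun v => by rw [hfdef]; dsimp only; split_ifs <;> omega, hRDF⟩, hIndep⟩,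
    fun v _ => hTot v⟩, hsum⟩

private lemma lower {n k : ℕ} (hk2 : 2 ≤ k) (hkn : 2 * k ≤ n)
    (f : Fin n → ℕ) (hf : IsOITRDF (circulant n k) f) :
    n - (n / (k + 1)) / 2 ≤ ∑ v, f v := by
  classical
  have hk1 : 1 ≤ k := by omega
  obtain ⟨⟨⟨hle2, hrdf⟩, hind⟩, htot⟩ := hf
  set Z := Finset.univ.filter (fun v : Fin n => f v = 0) with hZdef
  set T := Finset.univ.filter (fun v : Fin n => f v = 2) with hTdef
  have hZpair : ∀ a ∈ Z, ∀ b ∈ Z, ¬ (circulant n k).Adj a b := by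
    intro a ha b hb
    exact hind (Set.mem_setOf_eq ▸ (Finset.mem_filter.mp ha).2)
      (Set.mem_setOf_eq ▸ (Finset.mem_filter.mp hb).2)
  have h1 : Z.card * (k+1) ≤ n := indep_card_le hk1 hkn Z hZpair
  set g : Fin n → Fin n := fun a =>
    if h : ∃ u, (circulant n k).Adj a u ∧ f u = 2 then h.choose else a with hgdef
  have hg : ∀ a ∈ Z, (circulant n k).Adj a (g a) ∧ f (g a) = 2 := by
    intro a ha
    have h : ∃ u, (circulant n k).Adj a u ∧ f u = 2 :=
      hrdf a (Finset.mem_filter.mp ha).2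
    rw [hgdef]
    dsimp only
    rw [dif_pos h]
    exact h.choose_spec
  have h2 : Z.card ≤ 2 * T.card := by
    have himg : Z.image g ⊆ T := by
      intro u hu
      obtain ⟨a, ha, rfl⟩ := Finset.mem_image.mp hu
      exact Finset.mem_filter.mpr ⟨Finset.mem_univ _, (hg a ha).2⟩
    have hcard := Finset.card_le_card himg
    calc Z.card = ∑ u ∈ Z.image g, (Z.filter (fun v => g v = u)).card :=
          Finset.card_eq_sum_card_image g Z
      _ ≤ ∑ _u ∈ Z.image g, 2 := by
          apply Finset.sum_le_sum
          intro u hu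
          apply two_zeros hk1 hkn Z hZpair u
          intro z hz
          rw [Finset.mem_filter] at hz
          exact ⟨hz.1, hz.2 ▸ (hg z hz.1).1⟩
      _ = 2 * (Z.image g).card := by rw [Finset.sum_const, smul_eq_mul, mul_comm]
      _ ≤ 2 * T.card := by omega
  have hsum : ∑ v, f v + Z.card = n + T.card := by
    have e : ∀ v : Fin n, f v + (if f v = 0 then 1 else 0)
        = 1 + (if f v = 2 then 1 else 0) := by
      intro v
      have h := hle2 v
      by_cases h0 : f v = 0 <;> by_cases h2 : f v = 2 <;> simp [h0, h2] <;> omega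
    calc ∑ v, f v + Z.card = ∑ v : Fin n, (f v + if f v = 0 then 1 else 0) := by
          rw [Finset.sum_add_distrib, hZdef, Finset.card_filter]
      _ = ∑ v : Fin n, (1 + if f v = 2 then 1 else 0) :=
          Finset.sum_congr rfl (fun v _ => e v)
      _ = n + T.card := by
          rw [Finset.sum_add_distrib, hTdef, Finset.card_filter]
          simp
  have h3 : Z.card ≤ n / (k+1) := (Nat.le_div_iff_mul_le (by omega)).mpr h1
  generalize hq : n / (k+1) = q at h3 ⊢
  omega

/-- `γ_oitR(C(n,k)) = n - ⌊⌊n/(k+1)⌋/2⌋` for `2 ≤ k ≤ ⌊n/2⌋`. -/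
theorem stmt12 (n k : ℕ) (hk2 : 2 ≤ k) (hkn : k ≤ n / 2) :
    oitRomanDomNum (circulant n k) = n - (n / (k + 1)) / 2 := by
  have hkn' : 2 * k ≤ n := by omega
  have h2m : (k + 1) * (2 * ((n / (k+1)) / 2)) ≤ n := by
    have hq' : (n / (k+1)) * (k+1) ≤ n := Nat.div_mul_le_self n (k+1)
    have h1 : (k+1) * (2 * ((n / (k+1)) / 2)) ≤ (k+1) * (n / (k+1)) :=
      Nat.mul_le_mul_left _ (by omega)
    have h2 : (k+1) * (n / (k+1)) = (n / (k+1)) * (k+1) := mul_comm _ _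
    omega
  obtain ⟨f, hf, hsum⟩ := upper hk2 hkn' h2m
  apply le_antisymm
  · exact Nat.sInf_le ⟨f, hf, hsum⟩
  · refine le_csInf ⟨n - (n / (k + 1)) / 2, ⟨f, hf, hsum⟩⟩ ?_
    rintro w ⟨g, hg, rfl⟩
    exact lower hk2 hkn' g hg

end OITRPaper
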